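/- Let X be a CAT(0) cube complex with at least two vertices and no extremal vertices. For a vertex v ∈ X, the following are equivalent: (1) v is not skinny (i.e., the number of edges incident to v is not exactly 2); (2) there exist straight boundary points x, y, z ∈ ∂ₛX such that m(x,y,z) = v and x op_z y. -/

import Mathlib

/-!
We use the standard combinatorial model of a CAT(0) cube complex: it is identified
with its vertex set endowed with the combinatorial (ℓ¹) metric, i.e. with a median
graph `G` on a vertex type `V`.  Halfspaces are realised as the vertex sets of the
two sides of the hyperplane dual to an edge, the Roller compactification `X̄` is the
set of ultrafilters of halfspaces, vertices embedding via principal ultrafilters,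
and the Roller boundary `∂X` consists of the non-principal ultrafilters.
-/

open scoped ENNReal
open Set

namespace CCCR

variable {V V' : Type*}

/-- The interval between two vertices w.r.t. the combinatorial metric. -/
def vInterval (G : SimpleGraph V) (u v : V) : Set V :=
  {w : V | G.dist u w + G.dist w v = G.dist u v}

/-- Combinatorial model of a CAT(0) cube complex (identified with its vertex set,
endowed with the combinatorial metric): a connected median graph. -/
def IsCCC (G : SimpleGraph V) : Prop :=
  G.Connected ∧ ∀ x y z : V, ∃! m : V,
    m ∈ vInterval G x y ∧ m ∈ vInterval G y z ∧ m ∈ vInterval G z x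

/-- Halfspaces of the cube complex: the sides of the hyperplane dual to an edge. -/
def IsHalfspace (G : SimpleGraph V) (h : Set V) : Prop :=
  ∃ u v : V, G.Adj u v ∧ h = {w : V | G.dist w v < G.dist w u}

/-- The halfspace dual to the (oriented) edge `(u,v)` containing `v`. -/
def edgeHalf (G : SimpleGraph V) (u v : V) : Set V :=
  {w : V | G.dist w v < G.dist w u}

/-- The hyperplane (wall) dual to the edge `(u,v)`, recorded as its pair of sides. -/
def wallOf (G : SimpleGraph V) (u v : V) : Set (Set V) :=
  {edgeHalf G u v, (edgeHalf G u v)ᶜ}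

/-- Two (necessarily distinct) hyperplanes, with respective sides `h` and `k`,
are transverse: all four quarter-spaces are nonempty. -/
def Transv (h k : Set V) : Prop :=
  (h ∩ k).Nonempty ∧ (h ∩ kᶜ).Nonempty ∧ (hᶜ ∩ k).Nonempty ∧ (hᶜ ∩ kᶜ).Nonempty

/-- An ultrafilter of halfspaces: a point of the Roller compactification X̄.
It contains exactly one side of each hyperplane, and any two members intersect. -/
def IsUltra (G : SimpleGraph V) (σ : Set (Set V)) : Prop :=
  (∀ h ∈ σ, IsHalfspace G h) ∧
  (∀ h : Set V, IsHalfspace G h → (h ∈ σ ↔ hᶜ ∉ σ)) ∧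
  (∀ h ∈ σ, ∀ k ∈ σ, (h ∩ k).Nonempty)

/-- The principal ultrafilter of a vertex, i.e. the image of `v` in X̄. -/
def princ (G : SimpleGraph V) (v : V) : Set (Set V) :=
  {h : Set V | IsHalfspace G h ∧ v ∈ h}

/-- A point of the Roller boundary ∂X = X̄ ∖ X: a non-principal ultrafilter. -/
def IsBdryPt (G : SimpleGraph V) (σ : Set (Set V)) : Prop :=
  IsUltra G σ ∧ ∀ v : V, σ ≠ princ G v

/-- The Roller boundary ∂X as a type. -/
abbrev Bdry (G : SimpleGraph V) : Type _ := {σ : Set (Set V) // IsBdryPt G σ}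

/-- The Gromov product (x·y)_v = #𝒲(v | x, y) ∈ ℕ ∪ {+∞}, counted through the
sides containing both x and y but not v. -/
noncomputable def grom (_G : SimpleGraph V) (v : V) (x y : Set (Set V)) : ℕ∞ :=
  {h : Set V | h ∈ x ∧ h ∈ y ∧ v ∉ h}.encard

/-- The embedding ℕ ∪ {+∞} → ℤ ∪ {±∞}. -/
noncomputable def toE (n : ℕ∞) : EReal := ((n : ℝ≥0∞) : EReal)

/-- The cross ratio cr_v(x,y,z,w) = (x·z)_v + (y·w)_v − (x·w)_v − (y·z)_v ∈ ℤ ∪ {±∞}. -/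
noncomputable def crv (G : SimpleGraph V) (v : V) (x y z w : Set (Set V)) : EReal :=
  toE (grom G v x z) + toE (grom G v y w) - toE (grom G v x w) - toE (grom G v y z)

/-- The triple of sums of Gromov products attached to a 4-tuple. -/
noncomputable def tripod (G : SimpleGraph V) (v : V) (x y z w : Set (Set V)) :
    ℕ∞ × ℕ∞ × ℕ∞ :=
  (grom G v x y + grom G v z w, grom G v x z + grom G v y w, grom G v x w + grom G v y z)

/-- (x,y,z,w) ∈ 𝒜 w.r.t. the basepoint v: at most one of the three sums is infinite. -/
def inA (G : SimpleGraph V) (v : V) (x y z w : Set (Set V)) : Prop :=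
  ((tripod G v x y z w).1 ≠ ⊤ ∧ (tripod G v x y z w).2.1 ≠ ⊤) ∨
  ((tripod G v x y z w).1 ≠ ⊤ ∧ (tripod G v x y z w).2.2 ≠ ⊤) ∨
  ((tripod G v x y z w).2.1 ≠ ⊤ ∧ (tripod G v x y z w).2.2 ≠ ⊤)

/-- (x,y,z,w) ∈ 𝒜 (this is independent of the basepoint). -/
def memA (G : SimpleGraph V) (x y z w : Set (Set V)) : Prop :=
  ∀ v : V, inA G v x y z w

/-- Two triples in (ℕ ∪ {+∞})³ are equivalent if they differ by adding a constant
n ∈ ℕ to all three entries. -/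
def TripEquiv (p q : ℕ∞ × ℕ∞ × ℕ∞) : Prop :=
  (∃ n : ℕ, p.1 = q.1 + (n : ℕ∞) ∧ p.2.1 = q.2.1 + (n : ℕ∞) ∧ p.2.2 = q.2.2 + (n : ℕ∞)) ∨
  (∃ n : ℕ, q.1 = p.1 + (n : ℕ∞) ∧ q.2.1 = p.2.1 + (n : ℕ∞) ∧ q.2.2 = p.2.2 + (n : ℕ∞))

/-- crt(x,y,z,w) = ⟪a:b:c⟫ (the cross ratio triple is independent of the basepoint,
so we require the equality of classes at every basepoint). -/
def crtEq (G : SimpleGraph V) (x y z w : Set (Set V)) (a b c : ℕ∞) : Prop :=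
  ∀ v : V, TripEquiv (tripod G v x y z w) (a, b, c)

/-- The median of three points of X̄. -/
def med (x y z : Set (Set V)) : Set (Set V) := (x ∩ y) ∪ (y ∩ z) ∪ (z ∩ x)

/-- The interval I(x,y) ⊆ X̄ between two points of X̄. -/
def rInterval (G : SimpleGraph V) (x y : Set (Set V)) : Set (Set (Set V)) :=
  {σ : Set (Set V) | IsUltra G σ ∧ x ∩ y ⊆ σ}

/-- `Op G x y z` : x and y are opposite with respect to z, i.e. the median
m = m(x,y,z) lies in X and I(x,y) = I(x,m) ∪ I(m,y). -/
def Op (G : SimpleGraph V) (x y z : Set (Set V)) : Prop :=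
  (∃ p : V, med x y z = princ G p) ∧
  rInterval G x y = rInterval G x (med x y z) ∪ rInterval G (med x y z) y

/-- A geodesic ray (based at `r 0`). -/
def IsGeodRay (G : SimpleGraph V) (r : ℕ → V) : Prop :=
  (∀ n : ℕ, G.Adj (r n) (r (n + 1))) ∧
  ∀ m n : ℕ, m ≤ n → G.dist (r m) (r n) = n - m

/-- A bi-infinite geodesic line. -/
def IsGeodLine (G : SimpleGraph V) (L : ℤ → V) : Prop :=
  (∀ n : ℤ, G.Adj (L n) (L (n + 1))) ∧
  ∀ m n : ℤ, m ≤ n → (G.dist (L m) (L n) : ℤ) = n - m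

/-- The set 𝒲(r) of hyperplanes crossed by (the edges of) a ray. -/
def rayWalls (G : SimpleGraph V) (r : ℕ → V) : Set (Set (Set V)) :=
  {W : Set (Set V) | ∃ n : ℕ, W = wallOf G (r n) (r (n + 1))}

/-- A hyperplane is adjacent to `v` if it is dual to an edge incident to `v`. -/
def WallAdjTo (G : SimpleGraph V) (v : V) (W : Set (Set V)) : Prop :=
  ∃ u : V, G.Adj v u ∧ W = wallOf G v u

/-- A straight ray: no two of the hyperplanes it crosses are transverse. -/
def RayStraight (G : SimpleGraph V) (r : ℕ → V) : Prop :=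
  ∀ m n : ℕ, ¬ Transv (edgeHalf G (r m) (r (m + 1))) (edgeHalf G (r n) (r (n + 1)))

/-- A straight line: no two of the hyperplanes it crosses are transverse. -/
def LineStraight (G : SimpleGraph V) (L : ℤ → V) : Prop :=
  ∀ m n : ℤ, ¬ Transv (edgeHalf G (L m) (L (m + 1))) (edgeHalf G (L n) (L (n + 1)))

/-- The endpoint at infinity r⁺ ∈ ∂X of a ray: the ultrafilter of those halfspaces
containing all but finitely many of its vertices. -/
def rayEnd (G : SimpleGraph V) (r : ℕ → V) : Set (Set V) :=
  {h : Set V | IsHalfspace G h ∧ ∃ N : ℕ, ∀ n : ℕ, N ≤ n → r n ∈ h}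

/-- A straight point of the Roller boundary: the endpoint at infinity of a straight ray. -/
def IsStraightPt (G : SimpleGraph V) (x : Set (Set V)) : Prop :=
  ∃ r : ℕ → V, IsGeodRay G r ∧ RayStraight G r ∧ rayEnd G r = x

/-- x and y are the two endpoints at infinity of the line L. -/
def LineEnds (G : SimpleGraph V) (L : ℤ → V) (x y : Set (Set V)) : Prop :=
  rayEnd G (fun n : ℕ => L (n : ℤ)) = x ∧ rayEnd G (fun n : ℕ => L (-(n : ℤ))) = y

/-- The edges from `v` to `a` and from `v` to `b` span a square. -/
def SpansSquare (G : SimpleGraph V) (v a b : V) : Prop :=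
  ∃ w : V, w ≠ v ∧ G.Adj a w ∧ G.Adj b w

/-- An extremal vertex: some edge at `v` spans a square with every other edge at `v`. -/
def Extremal (G : SimpleGraph V) (v : V) : Prop :=
  ∃ a : V, G.Adj v a ∧ ∀ b : V, G.Adj v b → b ≠ a → SpansSquare G v a b

/-- The cube complex has no extremal vertices. -/
def NoExtremal (G : SimpleGraph V) : Prop := ∀ v : V, ¬ Extremal G v

/-- A skinny vertex: exactly two incident edges. -/
def Skinny (G : SimpleGraph V) (v : V) : Prop := {u : V | G.Adj v u}.encard = 2

/-- A skinny ray: a geodesic ray whose initial vertex has at least three incident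
edges and all of whose other vertices are skinny. -/
def IsSkinnyRay (G : SimpleGraph V) (r : ℕ → V) : Prop :=
  IsGeodRay G r ∧ 3 ≤ {u : V | G.Adj (r 0) u}.encard ∧ ∀ n : ℕ, 1 ≤ n → Skinny G (r n)

/-- (The vertex set of) a cube of the complex: a subset inducing a hypercube graph. -/
def IsCube (G : SimpleGraph V) (c : Set V) : Prop :=
  ∃ (n : ℕ) (e : c ≃ (Fin n → Bool)),
    ∀ a b : c, G.Adj (a : V) (b : V) ↔ ∃! i : Fin n, e a i ≠ e b i

/-- A maximal cube. -/
def IsMaxCube (G : SimpleGraph V) (c : Set V) : Prop :=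
  IsCube G c ∧ ∀ c' : Set V, IsCube G c' → c ⊆ c' → c' = c

/-- Completeness: there is no infinite ascending chain of cubes. -/
def CubeComplete (G : SimpleGraph V) : Prop :=
  ¬ ∃ c : ℕ → Set V, (∀ n : ℕ, IsCube G (c n)) ∧ ∀ n : ℕ, c n ⊂ c (n + 1)

/-- No free faces: no non-maximal cube is contained in a unique maximal cube. -/
def NoFreeFaces (G : SimpleGraph V) : Prop :=
  ∀ c : Set V, IsCube G c → ¬ IsMaxCube G c → ¬ ∃! m : Set V, IsMaxCube G m ∧ c ⊆ m

/-- #𝒲(x, z | y, w): the number of hyperplanes separating x and z from y and w,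
counted through the sides containing x and z. -/
noncomputable def sepCount (x z y w : Set (Set V)) : ℕ∞ :=
  {h : Set V | h ∈ x ∧ h ∈ z ∧ h ∉ y ∧ h ∉ w}.encard

/-- A Möbius map between Roller boundaries: it maps 𝒜(X) into 𝒜(Y) and preserves
cross ratios. -/
def Mobius (G : SimpleGraph V) (G' : SimpleGraph V') (f : Bdry G → Bdry G') : Prop :=
  ∀ x y z w : Bdry G, memA G x.1 y.1 z.1 w.1 →
    memA G' (f x).1 (f y).1 (f z).1 (f w).1 ∧
    ∀ (v : V) (v' : V'),
      crv G' v' (f x).1 (f y).1 (f z).1 (f w).1 = crv G v x.1 y.1 z.1 w.1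

/-- The induced action of a cubical isomorphism on X̄: an ultrafilter is mapped to
the set of images of its halfspaces. -/
def mapUltra (φ : V → V') (σ : Set (Set V)) : Set (Set V') :=
  (fun h : Set V => φ '' h) '' σ

/-- The standard cubulation of ℝ: vertex set ℤ, edges between consecutive integers. -/
def zline : SimpleGraph ℤ := SimpleGraph.fromRel (fun m n => n = m + 1)

end CCCR

open CCCR
namespace Stmt16Aux
open CCCR SimpleGraph Set

variable {V : Type*} {G : SimpleGraph V} {u v w p q r : V}

lemma mem_edgeHalf : w ∈ edgeHalf G u v ↔ G.dist w v < G.dist w u := Iff.rfl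

lemma mem_vInterval : w ∈ vInterval G u v ↔ G.dist u w + G.dist w v = G.dist u v := Iff.rfl

lemma right_mem_edgeHalf (huv : G.Adj u v) : v ∈ edgeHalf G u v := by
  have h1 : G.dist v v = 0 := G.dist_self
  have h2 : 0 < G.dist v u := (huv.symm.reachable).pos_dist_of_ne huv.ne'
  simpa [mem_edgeHalf, h1] using h2

lemma left_not_mem_edgeHalf : u ∉ edgeHalf G u v := by
  have h : G.dist u u = 0 := G.dist_self
  simp only [mem_edgeHalf, Set.mem_setOf_eq, h]
  omega

lemma exists_step (hc : G.Connected) (h : G.dist p r ≠ 0) :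
    ∃ p₁, G.Adj p p₁ ∧ G.dist p₁ r + 1 = G.dist p r := by
  obtain ⟨w, hw⟩ := (hc p r).exists_walk_length_eq_dist
  cases w with
  | nil => simp at hw; have h0 : G.dist p p = 0 := G.dist_self; omega
  | @cons _ b _ ha rest =>
    refine ⟨b, ha, ?_⟩
    have h1 : G.dist b r ≤ rest.length := G.dist_le rest
    have h2 : G.dist p r ≤ G.dist p b + G.dist b r := hc.dist_triangle
    have h3 : G.dist p b = 1 := SimpleGraph.dist_eq_one_iff_adj.mpr ha
    have h4 : rest.length + 1 = G.dist p r := by simpa using hw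
    omega

lemma adj_interval (hc : G.Connected) (huv : G.Adj u v)
    (hw : w ∈ vInterval G u v) : w = u ∨ w = v := by
  have h1 : G.dist u v = 1 := SimpleGraph.dist_eq_one_iff_adj.mpr huv
  have h2 : G.dist u w + G.dist w v = 1 := by rw [mem_vInterval] at hw; omega
  rcases Nat.eq_zero_or_pos (G.dist u w) with h | h
  · left; exact ((hc.dist_eq_zero_iff).mp h).symm
  · right; exact (hc.dist_eq_zero_iff).mp (by omega)

lemma dist_dichotomy (hc : G.Connected)
    (hm : ∀ x y z : V, ∃! m : V,
      m ∈ vInterval G x y ∧ m ∈ vInterval G y z ∧ m ∈ vInterval G z x)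
    (huv : G.Adj u v) (w : V) :
    G.dist w u = G.dist w v + 1 ∨ G.dist w v = G.dist w u + 1 := by
  obtain ⟨m, ⟨h1, h2, h3⟩, -⟩ := hm w u v
  rcases adj_interval hc huv h2 with h | h
  · right
    rw [h] at h3
    rw [mem_vInterval] at h3
    have h4 : G.dist v u = 1 := SimpleGraph.dist_eq_one_iff_adj.mpr huv.symm
    have h5 : G.dist v w = G.dist w v := G.dist_comm ..
    have h6 : G.dist u w = G.dist w u := G.dist_comm ..
    omega
  · left
    rw [h] at h1
    rw [mem_vInterval] at h1
    have h4 : G.dist v u = 1 := SimpleGraph.dist_eq_one_iff_adj.mpr huv.symm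
    have h5 : G.dist v u = G.dist u v := G.dist_comm ..
    omega

lemma mem_edgeHalf_iff (hc : G.Connected)
    (hm : ∀ x y z : V, ∃! m : V,
      m ∈ vInterval G x y ∧ m ∈ vInterval G y z ∧ m ∈ vInterval G z x)
    (huv : G.Adj u v) : w ∈ edgeHalf G u v ↔ G.dist w u = G.dist w v + 1 := by
  rcases dist_dichotomy hc hm huv w with h | h <;>
    simp [mem_edgeHalf, h] <;> omega

lemma compl_edgeHalf (hc : G.Connected)
    (hm : ∀ x y z : V, ∃! m : V,
      m ∈ vInterval G x y ∧ m ∈ vInterval G y z ∧ m ∈ vInterval G z x)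
    (huv : G.Adj u v) : (edgeHalf G u v)ᶜ = edgeHalf G v u := by
  ext w
  rw [Set.mem_compl_iff, mem_edgeHalf_iff hc hm huv, mem_edgeHalf_iff hc hm huv.symm]
  rcases dist_dichotomy hc hm huv w with h | h <;> omega


/-- The unique-median property. -/
def MedU (G : SimpleGraph V) : Prop :=
  ∀ x y z : V, ∃! m : V,
    m ∈ vInterval G x y ∧ m ∈ vInterval G y z ∧ m ∈ vInterval G z x

lemma edgeHalf_convex_aux (hc : G.Connected) (hm : MedU G) (huv : G.Adj u v) :
    ∀ n p q r, G.dist p q = n → p ∈ edgeHalf G u v → q ∈ edgeHalf G u v →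
      G.dist p r + G.dist r q = G.dist p q → r ∈ edgeHalf G u v := by
  intro n
  induction n using Nat.strong_induction_on with
  | _ n IH =>
    intro p q r hn hp hq hr
    by_contra hrW
    -- degenerate cases
    rcases Nat.eq_zero_or_pos (G.dist p r) with hpr0 | hpr0
    · exact hrW (((hc.dist_eq_zero_iff).mp hpr0) ▸ hp)
    rcases Nat.eq_zero_or_pos (G.dist r q) with hrq0 | hrq0
    · exact hrW (((hc.dist_eq_zero_iff).mp hrq0).symm ▸ hq)
    have hp' : G.dist p u = G.dist p v + 1 := (mem_edgeHalf_iff hc hm huv).mp hp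
    have hq' : G.dist q u = G.dist q v + 1 := (mem_edgeHalf_iff hc hm huv).mp hq
    have hr' : G.dist r v = G.dist r u + 1 := by
      rcases dist_dichotomy hc hm huv r with h | h
      · exact absurd ((mem_edgeHalf_iff hc hm huv).mpr h) hrW
      · exact h
    have hn2 : 2 ≤ n := by omega
    rcases eq_or_lt_of_le hn2 with hn2' | hn3
    · -- endgame : n = 2
      have hd1 : G.dist p r = 1 := by omega
      have hd2 : G.dist r q = 1 := by omega
      set γ := G.dist r u with hγ
      -- distances of p and q to u, v
      have t1 : G.dist p u ≤ G.dist p r + G.dist r u := hc.dist_triangle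
      have t2 : G.dist r u ≤ G.dist r p + G.dist p u := hc.dist_triangle
      have t3 : G.dist p v ≤ G.dist p r + G.dist r v := hc.dist_triangle
      have t4 : G.dist r v ≤ G.dist r p + G.dist p v := hc.dist_triangle
      have c1 : G.dist r p = G.dist p r := G.dist_comm ..
      have hpv : G.dist p v = γ ∧ G.dist p u = γ + 1 := by omega
      have t1' : G.dist q u ≤ G.dist q r + G.dist r u := hc.dist_triangle
      have t2' : G.dist r u ≤ G.dist r q + G.dist q u := hc.dist_triangle
      have t3' : G.dist q v ≤ G.dist q r + G.dist r v := hc.dist_triangle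
      have t4' : G.dist r v ≤ G.dist r q + G.dist q v := hc.dist_triangle
      have c2 : G.dist q r = G.dist r q := G.dist_comm ..
      have hqv : G.dist q v = γ ∧ G.dist q u = γ + 1 := by omega
      have hγ1 : 1 ≤ γ := by
        by_contra hγ0
        have hpv0 : p = v := (hc.dist_eq_zero_iff).mp (by omega)
        have hqv0 : q = v := (hc.dist_eq_zero_iff).mp (by omega)
        rw [hpv0, hqv0] at hn
        have : G.dist v v = 0 := G.dist_self
        omega
      obtain ⟨m', ⟨e1, e2, e3⟩, -⟩ := hm p q v
      rw [mem_vInterval] at e1 e2 e3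
      have c3 : G.dist v m' = G.dist m' v := G.dist_comm ..
      have c4 : G.dist m' p = G.dist p m' := G.dist_comm ..
      have c5 : G.dist v p = G.dist p v := G.dist_comm ..
      have hm'1 : G.dist p m' = 1 ∧ G.dist m' q = 1 ∧ G.dist m' v + 1 = γ := by
        have c6 : G.dist q m' = G.dist m' q := G.dist_comm ..
        omega
      have hm'u : G.dist m' u = γ := by
        rcases dist_dichotomy hc hm huv m' with h | h
        · omega
        · -- d m' v = d m' u + 1 : contradiction via p
          have t5 : G.dist p u ≤ G.dist p m' + G.dist m' u := hc.dist_triangle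
          omega
      -- both r and m' are medians of (p,q,u)
      obtain ⟨mu, -, hu⟩ := hm p q u
      have hrmed : r = mu := by
        apply hu
        refine ⟨?_, ?_, ?_⟩ <;> rw [mem_vInterval]
        · omega
        · have c6 : G.dist q r = G.dist r q := G.dist_comm ..
          omega
        · have c6 : G.dist u r = G.dist r u := G.dist_comm ..
          have c7 : G.dist r p = G.dist p r := G.dist_comm ..
          have c8 : G.dist u p = G.dist p u := G.dist_comm ..
          omega
      have hm'med : m' = mu := by
        apply hu
        refine ⟨?_, ?_, ?_⟩ <;> rw [mem_vInterval]
        · omega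
        · have c6 : G.dist q m' = G.dist m' q := G.dist_comm ..
          omega
        · have c6 : G.dist u m' = G.dist m' u := G.dist_comm ..
          have c8 : G.dist u p = G.dist p u := G.dist_comm ..
          omega
      rw [← hm'med] at hrmed
      rw [hrmed] at hr'
      omega
    · -- reduction : n ≥ 3
      -- step from p
      obtain ⟨p₁, hap₁, hs₁⟩ := exists_step hc (by omega : G.dist p r ≠ 0)
      have hpp₁ : G.dist p p₁ = 1 := SimpleGraph.dist_eq_one_iff_adj.mpr hap₁
      have hp₁q : G.dist p₁ q + 1 = n := by
        have t1 : G.dist p₁ q ≤ G.dist p₁ r + G.dist r q := hc.dist_triangle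
        have t2 : G.dist p q ≤ G.dist p p₁ + G.dist p₁ q := hc.dist_triangle
        omega
      have hr₁ : G.dist p₁ r + G.dist r q = G.dist p₁ q := by omega
      have eq1 : G.dist q v + (n - 1) = G.dist p v + 1 := by
        by_cases hp₁W : p₁ ∈ edgeHalf G u v
        · exact absurd (IH (G.dist p₁ q) (by omega) p₁ q r rfl hp₁W hq hr₁) hrW
        have hp₁' : G.dist p₁ v = G.dist p₁ u + 1 := by
          rcases dist_dichotomy hc hm huv p₁ with h | h
          · exact absurd ((mem_edgeHalf_iff hc hm huv).mpr h) hp₁W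
          · exact h
        have hb1 : G.dist p₁ u ≤ G.dist p₁ p + G.dist p u := hc.dist_triangle
        have hb2 : G.dist p u ≤ G.dist p p₁ + G.dist p₁ u := hc.dist_triangle
        have hb3 : G.dist p₁ v ≤ G.dist p₁ p + G.dist p v := hc.dist_triangle
        have hb4 : G.dist p v ≤ G.dist p p₁ + G.dist p₁ v := hc.dist_triangle
        have cb : G.dist p₁ p = G.dist p p₁ := G.dist_comm ..
        have hp₁v : G.dist p₁ v = G.dist p v + 1 := by omega
        obtain ⟨m4, ⟨f1, f2, f3⟩, -⟩ := hm p₁ q v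
        rw [mem_vInterval] at f1 f2 f3
        have hm4 : G.dist m4 u = G.dist m4 v + 1 := by
          rcases dist_dichotomy hc hm huv m4 with h | h
          · exact h
          · have t5 : G.dist q u ≤ G.dist q m4 + G.dist m4 u := hc.dist_triangle
            omega
        have hm4W : m4 ∈ edgeHalf G u v := (mem_edgeHalf_iff hc hm huv).mpr hm4
        have hpm4 : G.dist p m4 = G.dist p₁ m4 + 1 := by
          have t5 : G.dist p m4 ≤ G.dist p p₁ + G.dist p₁ m4 := hc.dist_triangle
          have t6 : G.dist p q ≤ G.dist p m4 + G.dist m4 q := hc.dist_triangle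
          have c6 : G.dist p₁ m4 = G.dist m4 p₁ := G.dist_comm ..
          omega
        by_cases hm4q : m4 = q
        · rw [hm4q] at f3
          have c6 : G.dist v q = G.dist q v := G.dist_comm ..
          have c7 : G.dist q p₁ = G.dist p₁ q := G.dist_comm ..
          have c8 : G.dist v p₁ = G.dist p₁ v := G.dist_comm ..
          omega
        · have hm4q' : G.dist m4 q ≠ 0 := fun h0 => hm4q ((hc.dist_eq_zero_iff).mp h0)
          have hle : G.dist p m4 < n := by
            have c6 : G.dist p₁ m4 = G.dist m4 p₁ := G.dist_comm ..
            omega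
          have hint : G.dist p p₁ + G.dist p₁ m4 = G.dist p m4 := by omega
          exact absurd (IH (G.dist p m4) hle p m4 p₁ rfl hp hm4W hint) hp₁W
      -- step from q
      obtain ⟨q₁, haq₁, hs₂⟩ := exists_step hc (by
        have c : G.dist q r = G.dist r q := G.dist_comm ..
        omega : G.dist q r ≠ 0)
      have hqq₁ : G.dist q q₁ = 1 := SimpleGraph.dist_eq_one_iff_adj.mpr haq₁
      have crq : G.dist q r = G.dist r q := G.dist_comm ..
      have hq₁p : G.dist q₁ p + 1 = n := by
        have t1 : G.dist q₁ p ≤ G.dist q₁ r + G.dist r p := hc.dist_triangle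
        have t2 : G.dist q p ≤ G.dist q q₁ + G.dist q₁ p := hc.dist_triangle
        have c1 : G.dist r p = G.dist p r := G.dist_comm ..
        have c2 : G.dist q p = G.dist p q := G.dist_comm ..
        omega
      have hr₂ : G.dist p r + G.dist r q₁ = G.dist p q₁ := by
        have c1 : G.dist q₁ p = G.dist p q₁ := G.dist_comm ..
        have c2 : G.dist r q₁ = G.dist q₁ r := G.dist_comm ..
        have t1 : G.dist p q₁ ≤ G.dist p r + G.dist r q₁ := hc.dist_triangle
        have t2 : G.dist p q ≤ G.dist p q₁ + G.dist q₁ q := hc.dist_triangle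
        have c3 : G.dist q₁ q = G.dist q q₁ := G.dist_comm ..
        omega
      have eq2 : G.dist p v + (n - 1) = G.dist q v + 1 := by
        by_cases hq₁W : q₁ ∈ edgeHalf G u v
        · have c1 : G.dist q₁ p = G.dist p q₁ := G.dist_comm ..
          exact absurd (IH (G.dist p q₁) (by omega) p q₁ r (by rfl) hp hq₁W hr₂) hrW
        have hq₁' : G.dist q₁ v = G.dist q₁ u + 1 := by
          rcases dist_dichotomy hc hm huv q₁ with h | h
          · exact absurd ((mem_edgeHalf_iff hc hm huv).mpr h) hq₁W
          · exact h
        have hb1 : G.dist q₁ u ≤ G.dist q₁ q + G.dist q u := hc.dist_triangle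
        have hb2 : G.dist q u ≤ G.dist q q₁ + G.dist q₁ u := hc.dist_triangle
        have hb3 : G.dist q₁ v ≤ G.dist q₁ q + G.dist q v := hc.dist_triangle
        have hb4 : G.dist q v ≤ G.dist q q₁ + G.dist q₁ v := hc.dist_triangle
        have cb : G.dist q₁ q = G.dist q q₁ := G.dist_comm ..
        have hq₁v : G.dist q₁ v = G.dist q v + 1 := by omega
        obtain ⟨m4, ⟨f1, f2, f3⟩, -⟩ := hm q₁ p v
        rw [mem_vInterval] at f1 f2 f3
        have hm4 : G.dist m4 u = G.dist m4 v + 1 := by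
          rcases dist_dichotomy hc hm huv m4 with h | h
          · exact h
          · have t5 : G.dist p u ≤ G.dist p m4 + G.dist m4 u := hc.dist_triangle
            omega
        have hm4W : m4 ∈ edgeHalf G u v := (mem_edgeHalf_iff hc hm huv).mpr hm4
        have hqm4 : G.dist q m4 = G.dist q₁ m4 + 1 := by
          have t5 : G.dist q m4 ≤ G.dist q q₁ + G.dist q₁ m4 := hc.dist_triangle
          have t6 : G.dist q p ≤ G.dist q m4 + G.dist m4 p := hc.dist_triangle
          have c6 : G.dist q₁ m4 = G.dist m4 q₁ := G.dist_comm ..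
          have c7 : G.dist q p = G.dist p q := G.dist_comm ..
          omega
        by_cases hm4p : m4 = p
        · rw [hm4p] at f3
          have c6 : G.dist v p = G.dist p v := G.dist_comm ..
          have c7 : G.dist p q₁ = G.dist q₁ p := G.dist_comm ..
          have c8 : G.dist v q₁ = G.dist q₁ v := G.dist_comm ..
          omega
        · have hm4p' : G.dist m4 p ≠ 0 := fun h0 => hm4p ((hc.dist_eq_zero_iff).mp h0)
          have hle : G.dist q m4 < n := by
            have c6 : G.dist q₁ m4 = G.dist m4 q₁ := G.dist_comm ..
            omega
          have hint : G.dist q q₁ + G.dist q₁ m4 = G.dist q m4 := by omega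
          exact absurd (IH (G.dist q m4) hle q m4 q₁ rfl hq hm4W hint) hq₁W
      omega

lemma edgeHalf_convex (hc : G.Connected) (hm : MedU G) (huv : G.Adj u v)
    (hp : p ∈ edgeHalf G u v) (hq : q ∈ edgeHalf G u v)
    (hr : G.dist p r + G.dist r q = G.dist p q) : r ∈ edgeHalf G u v :=
  edgeHalf_convex_aux hc hm huv (G.dist p q) p q r rfl hp hq hr


lemma halfspace_eq_edgeHalf (hc : G.Connected) (hm : MedU G) (huv : G.Adj u v)
    (hpq : G.Adj p q) (hp : p ∉ edgeHalf G u v) (hq : q ∈ edgeHalf G u v) :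
    edgeHalf G u v = edgeHalf G p q := by
  have hdpq : G.dist p q = 1 := SimpleGraph.dist_eq_one_iff_adj.mpr hpq
  ext z
  constructor
  · intro hz
    rw [mem_edgeHalf]
    rcases dist_dichotomy hc hm hpq z with h | h
    · omega
    · exfalso
      apply hp
      apply edgeHalf_convex hc hm huv hz hq
      omega
  · intro hz
    by_contra hz'
    have hzvu : z ∈ edgeHalf G v u := by
      rw [← compl_edgeHalf hc hm huv]; exact hz'
    have hpvu : p ∈ edgeHalf G v u := by
      rw [← compl_edgeHalf hc hm huv]; exact hp
    have hqvu : q ∈ edgeHalf G v u := by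
      apply edgeHalf_convex hc hm huv.symm hzvu hpvu
      rw [mem_edgeHalf] at hz
      have c1 : G.dist q p = G.dist p q := G.dist_comm ..
      rcases dist_dichotomy hc hm hpq z with h | h <;> omega
    rw [mem_edgeHalf_iff hc hm huv] at hq
    rw [mem_edgeHalf_iff hc hm huv.symm] at hqvu
    omega

lemma transv_symm {h k : Set V} (ht : Transv h k) : Transv k h := by
  obtain ⟨a, b, c, d⟩ := ht
  exact ⟨by rwa [Set.inter_comm], by rwa [Set.inter_comm], by rwa [Set.inter_comm],
    by rwa [Set.inter_comm]⟩

lemma transv_compl_left {h k : Set V} (ht : Transv hᶜ k) : Transv h k := by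
  obtain ⟨a, b, c, d⟩ := ht
  rw [compl_compl] at c d
  exact ⟨c, d, a, b⟩

lemma not_transv_self {h : Set V} : ¬ Transv h h := by
  rintro ⟨-, ⟨z, hz1, hz2⟩, -, -⟩
  exact hz2 hz1

lemma transv_to_square {a b : V} (hc : G.Connected) (hm : MedU G)
    (hva : G.Adj v a) (hvb : G.Adj v b) (hab : a ≠ b)
    (ht : Transv (edgeHalf G v a) (edgeHalf G v b)) : SpansSquare G v a b := by
  obtain ⟨⟨p, hp1, hp2⟩, -, -, -⟩ := ht
  rw [mem_edgeHalf] at hp1 hp2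
  have hdva : G.dist v a = 1 := SimpleGraph.dist_eq_one_iff_adj.mpr hva
  have hdvb : G.dist v b = 1 := SimpleGraph.dist_eq_one_iff_adj.mpr hvb
  have hab2 : G.dist a b = 2 := by
    have t1 : G.dist a b ≤ G.dist a v + G.dist v b := hc.dist_triangle
    have c1 : G.dist a v = G.dist v a := G.dist_comm ..
    have h0 : G.dist a b ≠ 0 := fun h0 => hab ((hc.dist_eq_zero_iff).mp h0)
    have h1 : G.dist a b ≠ 1 := by
      intro h1
      have hadj : G.Adj a b := SimpleGraph.dist_eq_one_iff_adj.mp h1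
      rcases dist_dichotomy hc hm hadj v with h | h <;> omega
    omega
  obtain ⟨m, ⟨g1, g2, g3⟩, -⟩ := hm p a b
  rw [mem_vInterval] at g1 g2 g3
  have tpv1 : G.dist p v ≤ G.dist p a + G.dist a v := hc.dist_triangle
  have tpv2 : G.dist p v ≤ G.dist p b + G.dist b v := hc.dist_triangle
  have ca : G.dist a v = G.dist v a := G.dist_comm ..
  have cb : G.dist b v = G.dist v b := G.dist_comm ..
  have cbp : G.dist b p = G.dist p b := G.dist_comm ..
  have cam : G.dist a m = G.dist m a := G.dist_comm ..
  have cmp : G.dist m p = G.dist p m := G.dist_comm ..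
  have cba : G.dist b a = G.dist a b := G.dist_comm ..
  have hma : G.dist m a = 1 ∧ G.dist m b = 1 := by
    rcases Nat.eq_zero_or_pos (G.dist m a) with h0 | h0
    · have he : m = a := (hc.dist_eq_zero_iff).mp (by omega)
      rw [he] at g3
      have cap : G.dist a p = G.dist p a := G.dist_comm ..
      omega
    rcases Nat.eq_zero_or_pos (G.dist m b) with h1 | h1
    · have he : m = b := (hc.dist_eq_zero_iff).mp h1
      rw [he] at g1
      omega
    omega
  have hmv : m ≠ v := by
    intro h0
    rw [h0] at g1
    omega
  refine ⟨m, hmv, SimpleGraph.dist_eq_one_iff_adj.mp (by omega),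
    SimpleGraph.dist_eq_one_iff_adj.mp ?_⟩
  have cbm : G.dist b m = G.dist m b := G.dist_comm ..
  omega

lemma nested_of_not_transv {b : V} (hc : G.Connected) (hm : MedU G)
    (hpq : G.Adj p q) (hqb : G.Adj q b) (hbp : b ≠ p)
    (hnt : ¬ Transv (edgeHalf G p q) (edgeHalf G q b)) :
    edgeHalf G q b ⊆ edgeHalf G p q := by
  have hdbq : G.dist b q = 1 := SimpleGraph.dist_eq_one_iff_adj.mpr hqb.symm
  have hdpq : G.dist p q = 1 := SimpleGraph.dist_eq_one_iff_adj.mpr hpq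
  have hdbp : G.dist b p = 2 := by
    rcases dist_dichotomy hc hm hpq b with h | h
    · omega
    · exfalso
      have h0 : G.dist b p = 0 := by omega
      exact hbp ((hc.dist_eq_zero_iff).mp h0)
  have hbmem : b ∈ edgeHalf G p q := by rw [mem_edgeHalf]; omega
  have hpnot : p ∉ edgeHalf G q b := by
    rw [mem_edgeHalf]
    have c1 : G.dist p b = G.dist b p := G.dist_comm ..
    have c3 : G.dist q p = G.dist p q := G.dist_comm ..
    omega
  intro z hz
  by_contra hz'
  exact hnt ⟨⟨b, hbmem, right_mem_edgeHalf hqb⟩,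
    ⟨q, right_mem_edgeHalf hpq, left_not_mem_edgeHalf⟩,
    ⟨z, hz', hz⟩,
    ⟨p, left_not_mem_edgeHalf, hpnot⟩⟩

lemma exists_next (hc : G.Connected) (hm : MedU G) (hne : NoExtremal G)
    (hpq : G.Adj p q) :
    ∃ b : V, G.Adj q b ∧ edgeHalf G q b ⊆ edgeHalf G p q := by
  have h := hne q
  rw [Extremal] at h
  push_neg at h
  obtain ⟨b, hqb, hbp, hnsq⟩ := h p hpq.symm
  refine ⟨b, hqb, nested_of_not_transv hc hm hpq hqb hbp ?_⟩
  intro ht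
  apply hnsq
  have hcompl : edgeHalf G p q = (edgeHalf G q p)ᶜ :=
    (compl_edgeHalf hc hm hpq.symm).symm
  rw [hcompl] at ht
  exact transv_to_square hc hm hpq.symm hqb (Ne.symm hbp) (transv_compl_left ht)


section Ray

variable (hc : G.Connected) (hm : MedU G) (hne : NoExtremal G) {a : V} (hva : G.Adj v a)

noncomputable def raySeq : ℕ → Σ' (x y : V), G.Adj x y
  | 0 => ⟨v, a, hva⟩
  | n + 1 =>
    let s := raySeq n
    ⟨s.2.1, (exists_next hc hm hne s.2.2).choose,
      (exists_next hc hm hne s.2.2).choose_spec.1⟩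

noncomputable def ray (n : ℕ) : V := (raySeq hc hm hne hva n).1

lemma ray_zero : ray hc hm hne hva 0 = v := rfl

lemma ray_one : ray hc hm hne hva 1 = a := rfl

lemma ray_succ (n : ℕ) : ray hc hm hne hva (n + 1) = (raySeq hc hm hne hva n).2.1 := rfl

lemma ray_adj (n : ℕ) : G.Adj (ray hc hm hne hva n) (ray hc hm hne hva (n + 1)) :=
  (raySeq hc hm hne hva n).2.2

noncomputable def rayH (n : ℕ) : Set V :=
  edgeHalf G (ray hc hm hne hva n) (ray hc hm hne hva (n + 1))

lemma rayH_zero : rayH hc hm hne hva 0 = edgeHalf G v a := rfl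

lemma rayH_succ_subset (n : ℕ) : rayH hc hm hne hva (n + 1) ⊆ rayH hc hm hne hva n :=
  (exists_next hc hm hne (raySeq hc hm hne hva n).2.2).choose_spec.2

lemma rayH_subset {m n : ℕ} (hmn : m ≤ n) : rayH hc hm hne hva n ⊆ rayH hc hm hne hva m := by
  induction n, hmn using Nat.le_induction with
  | base => exact subset_rfl
  | succ n hmn ih => exact (rayH_succ_subset hc hm hne hva n).trans ih

lemma ray_not_mem_rayH (n : ℕ) : ray hc hm hne hva n ∉ rayH hc hm hne hva n :=
  left_not_mem_edgeHalf

lemma ray_succ_mem_rayH (n : ℕ) : ray hc hm hne hva (n + 1) ∈ rayH hc hm hne hva n :=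
  right_mem_edgeHalf (ray_adj hc hm hne hva n)

lemma ray_mem_rayH_of_lt {n k : ℕ} (h : n < k) :
    ray hc hm hne hva k ∈ rayH hc hm hne hva n := by
  obtain ⟨j, rfl⟩ : ∃ j, k = j + 1 := ⟨k - 1, by omega⟩
  exact rayH_subset hc hm hne hva (by omega) (ray_succ_mem_rayH hc hm hne hva j)

lemma ray_not_mem_rayH_of_le {n k : ℕ} (h : k ≤ n) :
    ray hc hm hne hva k ∉ rayH hc hm hne hva n := fun hmem =>
  ray_not_mem_rayH hc hm hne hva k (rayH_subset hc hm hne hva h hmem)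

lemma ray_geod {m n : ℕ} (hmn : m ≤ n) :
    G.dist (ray hc hm hne hva m) (ray hc hm hne hva n) = n - m := by
  induction n, hmn using Nat.le_induction with
  | base => simp [G.dist_self]
  | succ n hmn ih =>
    rcases dist_dichotomy hc hm (ray_adj hc hm hne hva n) (ray hc hm hne hva m) with h | h
    · exfalso
      apply ray_not_mem_rayH_of_le hc hm hne hva hmn
      rw [rayH, mem_edgeHalf]
      omega
    · omega

lemma ray_isGeodRay : IsGeodRay G (ray hc hm hne hva) :=
  ⟨ray_adj hc hm hne hva, fun m n hmn => ray_geod hc hm hne hva hmn⟩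

lemma ray_straight : RayStraight G (ray hc hm hne hva) := by
  intro m n ht
  rcases lt_trichotomy m n with h | h | h
  · obtain ⟨-, -, ⟨z, hz1, hz2⟩, -⟩ := ht
    exact hz1 (rayH_subset hc hm hne hva (by omega : m ≤ n) hz2)
  · rw [h] at ht
    exact not_transv_self ht
  · obtain ⟨-, ⟨z, hz1, hz2⟩, -, -⟩ := ht
    exact hz2 (rayH_subset hc hm hne hva (by omega : n ≤ m) hz1)

lemma flip_up (huv : G.Adj u w) {i : ℕ}
    (hi : ray hc hm hne hva i ∉ edgeHalf G u w)
    (hi1 : ray hc hm hne hva (i + 1) ∈ edgeHalf G u w) :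
    edgeHalf G u w = rayH hc hm hne hva i :=
  halfspace_eq_edgeHalf hc hm huv (ray_adj hc hm hne hva i) hi hi1

lemma flip_down (huv : G.Adj u w) {i : ℕ}
    (hi : ray hc hm hne hva i ∈ edgeHalf G u w)
    (hi1 : ray hc hm hne hva (i + 1) ∉ edgeHalf G u w) :
    (edgeHalf G u w)ᶜ = rayH hc hm hne hva i := by
  rw [compl_edgeHalf hc hm huv]
  apply halfspace_eq_edgeHalf hc hm huv.symm (ray_adj hc hm hne hva i)
  · rw [← compl_edgeHalf hc hm huv]
    simpa using hi
  · rw [← compl_edgeHalf hc hm huv]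
    simpa using hi1

lemma no_two_flips (huv : G.Adj u w) {i j : ℕ} (hij : i < j)
    (hfi : ¬(ray hc hm hne hva i ∈ edgeHalf G u w ↔
      ray hc hm hne hva (i + 1) ∈ edgeHalf G u w))
    (hfj : ¬(ray hc hm hne hva j ∈ edgeHalf G u w ↔
      ray hc hm hne hva (j + 1) ∈ edgeHalf G u w)) : False := by
  have hne' : rayH hc hm hne hva i ≠ rayH hc hm hne hva j := by
    intro he
    exact ray_not_mem_rayH_of_le hc hm hne hva (by omega : i + 1 ≤ j)
      (he ▸ ray_succ_mem_rayH hc hm hne hva i)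
  have hne'' : rayH hc hm hne hva j ≠ (rayH hc hm hne hva i)ᶜ := by
    intro he
    have h1 : ray hc hm hne hva (j + 1) ∈ rayH hc hm hne hva j :=
      ray_succ_mem_rayH hc hm hne hva j
    have h2 : ray hc hm hne hva (j + 1) ∈ rayH hc hm hne hva i :=
      rayH_subset hc hm hne hva (by omega : i ≤ j) h1
    rw [he] at h1
    exact h1 h2
  have hci : edgeHalf G u w = rayH hc hm hne hva i ∨
      (edgeHalf G u w)ᶜ = rayH hc hm hne hva i := by
    by_cases h1 : ray hc hm hne hva i ∈ edgeHalf G u w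
    · exact Or.inr (flip_down hc hm hne hva huv h1 (fun h2 => hfi ⟨fun _ => h2, fun _ => h1⟩))
    · exact Or.inl (flip_up hc hm hne hva huv h1 (by tauto))
  have hcj : edgeHalf G u w = rayH hc hm hne hva j ∨
      (edgeHalf G u w)ᶜ = rayH hc hm hne hva j := by
    by_cases h1 : ray hc hm hne hva j ∈ edgeHalf G u w
    · exact Or.inr (flip_down hc hm hne hva huv h1 (fun h2 => hfj ⟨fun _ => h2, fun _ => h1⟩))
    · exact Or.inl (flip_up hc hm hne hva huv h1 (by tauto))
  rcases hci with h1 | h1 <;> rcases hcj with h2 | h2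
  · exact hne' (h1 ▸ h2)
  · exact hne'' (by rw [← h2, ← h1])
  · apply hne''
    rw [← h2, ← h1, compl_compl]
  · apply hne'
    rw [← h1, ← h2]

lemma ray_eventually (huv : G.Adj u w) :
    (∃ N, ∀ n, N ≤ n → ray hc hm hne hva n ∈ edgeHalf G u w) ∨
    (∃ N, ∀ n, N ≤ n → ray hc hm hne hva n ∉ edgeHalf G u w) := by
  by_cases hflip : ∃ i, ¬(ray hc hm hne hva i ∈ edgeHalf G u w ↔
      ray hc hm hne hva (i + 1) ∈ edgeHalf G u w)
  · obtain ⟨i, hi⟩ := hflip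
    have hconst : ∀ n, i + 1 ≤ n →
        (ray hc hm hne hva n ∈ edgeHalf G u w ↔
          ray hc hm hne hva (i + 1) ∈ edgeHalf G u w) := by
      intro n hn
      induction n, hn using Nat.le_induction with
      | base => exact Iff.rfl
      | succ n hn ih =>
        have hnoflip : (ray hc hm hne hva n ∈ edgeHalf G u w ↔
            ray hc hm hne hva (n + 1) ∈ edgeHalf G u w) := by
          by_contra hf
          exact no_two_flips hc hm hne hva huv (by omega : i < n) hi hf
        rw [← hnoflip]
        exact ih
    by_cases hmem : ray hc hm hne hva (i + 1) ∈ edgeHalf G u w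
    · exact Or.inl ⟨i + 1, fun n hn => (hconst n hn).mpr hmem⟩
    · exact Or.inr ⟨i + 1, fun n hn => fun hmem' => hmem ((hconst n hn).mp hmem')⟩
  · push_neg at hflip
    have hconst : ∀ n, (ray hc hm hne hva n ∈ edgeHalf G u w ↔
        ray hc hm hne hva 0 ∈ edgeHalf G u w) := by
      intro n
      induction n with
      | zero => exact Iff.rfl
      | succ n ih => rw [← hflip n]; exact ih
    by_cases hmem : ray hc hm hne hva 0 ∈ edgeHalf G u w
    · exact Or.inl ⟨0, fun n _ => (hconst n).mpr hmem⟩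
    · exact Or.inr ⟨0, fun n _ => fun hm' => hmem ((hconst n).mp hm')⟩

lemma rayEnd_ultra : IsUltra G (rayEnd G (ray hc hm hne hva)) := by
  refine ⟨fun h hh => hh.1, ?_, ?_⟩
  · intro h hh
    constructor
    · rintro ⟨-, N1, hN1⟩ ⟨-, N2, hN2⟩
      have h1 := hN1 (max N1 N2) (le_max_left ..)
      have h2 := hN2 (max N1 N2) (le_max_right ..)
      exact h2 h1
    · intro hcompl
      obtain ⟨u', w', huw, rfl⟩ := hh
      rcases ray_eventually hc hm hne hva huw with ⟨N, hN⟩ | ⟨N, hN⟩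
      · exact ⟨⟨u', w', huw, rfl⟩, N, hN⟩
      · exfalso
        apply hcompl
        refine ⟨⟨w', u', huw.symm, ?_⟩, N, fun n hn => hN n hn⟩
        exact compl_edgeHalf hc hm huw
  · rintro h ⟨-, N1, hN1⟩ k ⟨-, N2, hN2⟩
    exact ⟨ray hc hm hne hva (max N1 N2),
      hN1 _ (le_max_left ..), hN2 _ (le_max_right ..)⟩

lemma rayH_isHalfspace (n : ℕ) : IsHalfspace G (rayH hc hm hne hva n) :=
  ⟨ray hc hm hne hva n, ray hc hm hne hva (n + 1), ray_adj hc hm hne hva n, rfl⟩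

lemma rayH_mem_rayEnd (n : ℕ) : rayH hc hm hne hva n ∈ rayEnd G (ray hc hm hne hva) :=
  ⟨rayH_isHalfspace hc hm hne hva n, n + 1,
    fun k hk => ray_mem_rayH_of_lt hc hm hne hva (by omega)⟩

lemma rayEnd_not_princ (w : V) : rayEnd G (ray hc hm hne hva) ≠ princ G w := by
  intro hw
  have hmem : ∀ n, w ∈ rayH hc hm hne hva n := by
    intro n
    have h1 := rayH_mem_rayEnd hc hm hne hva n
    rw [hw] at h1
    exact h1.2
  have hdesc : ∀ n, G.dist w (ray hc hm hne hva n) + n ≤ G.dist w v := by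
    intro n
    induction n with
    | zero => simp [ray_zero]
    | succ n ih =>
      have h1 := hmem n
      rw [rayH, mem_edgeHalf] at h1
      omega
  have := hdesc (G.dist w v + 1)
  omega

lemma rayEnd_bdry : IsBdryPt G (rayEnd G (ray hc hm hne hva)) :=
  ⟨rayEnd_ultra hc hm hne hva, rayEnd_not_princ hc hm hne hva⟩

lemma rayEnd_straight : IsStraightPt G (rayEnd G (ray hc hm hne hva)) :=
  ⟨ray hc hm hne hva, ray_isGeodRay hc hm hne hva, ray_straight hc hm hne hva, rfl⟩

end Ray


lemma dist_two_of_ne_nbrs {a b : V} (hc : G.Connected) (hm : MedU G)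
    (hva : G.Adj v a) (hvb : G.Adj v b) (hab : a ≠ b) :
    G.dist a b = 2 := by
  have hdva : G.dist a v = 1 := SimpleGraph.dist_eq_one_iff_adj.mpr hva.symm
  have hdvb : G.dist v b = 1 := SimpleGraph.dist_eq_one_iff_adj.mpr hvb
  have t1 : G.dist a b ≤ G.dist a v + G.dist v b := hc.dist_triangle
  have h0 : G.dist a b ≠ 0 := fun h0 => hab ((hc.dist_eq_zero_iff).mp h0)
  have h1 : G.dist a b ≠ 1 := by
    intro h1
    have hadj : G.Adj a b := SimpleGraph.dist_eq_one_iff_adj.mp h1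
    have hdav : G.dist v a = 1 := SimpleGraph.dist_eq_one_iff_adj.mpr hva
    rcases dist_dichotomy hc hm hadj v with h | h <;> omega
  omega

lemma not_mem_edgeHalf_other {a b : V} (hc : G.Connected) (hm : MedU G)
    (hva : G.Adj v a) (hvb : G.Adj v b) (hab : a ≠ b) :
    a ∉ edgeHalf G v b := by
  rw [mem_edgeHalf]
  have h2 : G.dist a b = 2 := dist_two_of_ne_nbrs hc hm hva hvb hab
  have h1 : G.dist a v = 1 := SimpleGraph.dist_eq_one_iff_adj.mpr hva.symm
  omega

section Leaves

variable (hc : G.Connected) (hm : MedU G) (hne : NoExtremal G) {a b : V}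

lemma ray_leaves (hva : G.Adj v a) (huv : G.Adj u w)
    (hv : v ∈ edgeHalf G u w) (hex : ∃ n, ray hc hm hne hva n ∉ edgeHalf G u w) :
    ∃ m, (edgeHalf G u w)ᶜ = rayH hc hm hne hva m := by
  obtain ⟨n, hn⟩ := hex
  have key : ∀ n, ray hc hm hne hva n ∉ edgeHalf G u w →
      ∃ m, ray hc hm hne hva m ∈ edgeHalf G u w ∧
        ray hc hm hne hva (m + 1) ∉ edgeHalf G u w := by
    intro n
    induction n with
    | zero => intro h0; exact absurd hv (by rwa [ray_zero] at h0)
    | succ n ih =>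
      intro h1
      by_cases h2 : ray hc hm hne hva n ∈ edgeHalf G u w
      · exact ⟨n, h2, h1⟩
      · exact ih h2
  obtain ⟨m, hm1, hm2⟩ := key n hn
  exact ⟨m, flip_down hc hm hne hva huv hm1 hm2⟩

lemma ray_enters (hva : G.Adj v a) (huv : G.Adj u w)
    (hv : v ∉ edgeHalf G u w) (hex : ∃ n, ray hc hm hne hva n ∈ edgeHalf G u w) :
    ∃ m, edgeHalf G u w = rayH hc hm hne hva m := by
  obtain ⟨n, hn⟩ := hex
  have key : ∀ n, ray hc hm hne hva n ∈ edgeHalf G u w →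
      ∃ m, ray hc hm hne hva m ∉ edgeHalf G u w ∧
        ray hc hm hne hva (m + 1) ∈ edgeHalf G u w := by
    intro n
    induction n with
    | zero => intro h0; exact absurd (by rwa [ray_zero] at h0) hv
    | succ n ih =>
      intro h1
      by_cases h2 : ray hc hm hne hva n ∈ edgeHalf G u w
      · exact ih h2
      · exact ⟨n, h2, h1⟩
  obtain ⟨m, hm1, hm2⟩ := key n hn
  exact ⟨m, flip_up hc hm hne hva huv hm1 hm2⟩

lemma leaves_unique (hva : G.Adj v a) (hvb : G.Adj v b) (hab : a ≠ b)
    (huv : G.Adj u w) (hv : v ∈ edgeHalf G u w)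
    (hA : ∃ n, ray hc hm hne hva n ∉ edgeHalf G u w)
    (hB : ∃ n, ray hc hm hne hvb n ∉ edgeHalf G u w) : False := by
  obtain ⟨mA, hmA⟩ := ray_leaves hc hm hne hva huv hv hA
  obtain ⟨mB, hmB⟩ := ray_leaves hc hm hne hvb huv hv hB
  have hsubA : (edgeHalf G u w)ᶜ ⊆ edgeHalf G v a := by
    rw [hmA, ← rayH_zero hc hm hne hva]
    exact rayH_subset hc hm hne hva (Nat.zero_le mA)
  have hsubB : (edgeHalf G u w)ᶜ ⊆ edgeHalf G v b := by
    rw [hmB, ← rayH_zero hc hm hne hvb]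
    exact rayH_subset hc hm hne hvb (Nat.zero_le mB)
  -- ray from b enters edgeHalf v a
  have hentB : ∃ n, ray hc hm hne hvb n ∈ edgeHalf G v a := by
    refine ⟨mB + 1, hsubA ?_⟩
    rw [hmB]
    exact ray_succ_mem_rayH hc hm hne hvb mB
  have hentA : ∃ n, ray hc hm hne hva n ∈ edgeHalf G v b := by
    refine ⟨mA + 1, hsubB ?_⟩
    rw [hmA]
    exact ray_succ_mem_rayH hc hm hne hva mA
  obtain ⟨jB, hjB⟩ := ray_enters hc hm hne hvb hva left_not_mem_edgeHalf hentB
  obtain ⟨jA, hjA⟩ := ray_enters hc hm hne hva hvb left_not_mem_edgeHalf hentA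
  have hab1 : edgeHalf G v a ⊆ edgeHalf G v b := by
    rw [hjB, ← rayH_zero hc hm hne hvb]
    exact rayH_subset hc hm hne hvb (Nat.zero_le jB)
  exact not_mem_edgeHalf_other hc hm hva hvb hab (hab1 (right_mem_edgeHalf hva))

end Leaves



section Main

variable (hc : G.Connected) (hm : MedU G) (hne : NoExtremal G) {a₁ a₂ a₃ : V}

/-- If two of the three rays have the halfspace `t` in their end, then `v ∈ t`. -/
lemma key2 (hva : G.Adj v a₁) (hvb : G.Adj v a₂) (hab : a₁ ≠ a₂) {t : Set V}
    (htA : t ∈ rayEnd G (ray hc hm hne hva)) (htB : t ∈ rayEnd G (ray hc hm hne hvb)) :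
    v ∈ t := by
  obtain ⟨⟨u', w', huw, rfl⟩, N1, hN1⟩ := htA
  obtain ⟨-, N2, hN2⟩ := htB
  by_contra hv
  have hv' : v ∈ edgeHalf G w' u' := by
    rw [← compl_edgeHalf hc hm huw]; exact hv
  apply leaves_unique hc hm hne hva hvb hab huw.symm hv'
  · refine ⟨N1, ?_⟩
    rw [← compl_edgeHalf hc hm huw]
    have h1 : ray hc hm hne hva N1 ∈ edgeHalf G u' w' := hN1 N1 le_rfl
    simp only [Set.mem_compl_iff, not_not]
    exact h1
  · refine ⟨N2, ?_⟩
    rw [← compl_edgeHalf hc hm huw]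
    have h1 : ray hc hm hne hvb N2 ∈ edgeHalf G u' w' := hN2 N2 le_rfl
    simp only [Set.mem_compl_iff, not_not]
    exact h1

lemma med_eq (ha₁ : G.Adj v a₁) (ha₂ : G.Adj v a₂) (ha₃ : G.Adj v a₃)
    (h12 : a₁ ≠ a₂) (h13 : a₁ ≠ a₃) (h23 : a₂ ≠ a₃) :
    med (rayEnd G (ray hc hm hne ha₁)) (rayEnd G (ray hc hm hne ha₂))
      (rayEnd G (ray hc hm hne ha₃)) = princ G v := by
  ext t
  constructor
  · intro ht
    rcases ht with (⟨h1, h2⟩ | ⟨h1, h2⟩) | ⟨h1, h2⟩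
    · exact ⟨h1.1, key2 hc hm hne ha₁ ha₂ h12 h1 h2⟩
    · exact ⟨h1.1, key2 hc hm hne ha₂ ha₃ h23 h1 h2⟩
    · exact ⟨h1.1, key2 hc hm hne ha₃ ha₁ (Ne.symm h13) h1 h2⟩
  · rintro ⟨⟨u', w', huw, rfl⟩, hvm⟩
    have hmem : ∀ (b : V) (hvb : G.Adj v b),
        ¬(∃ n, ray hc hm hne hvb n ∉ edgeHalf G u' w') →
        edgeHalf G u' w' ∈ rayEnd G (ray hc hm hne hvb) := by
      intro b hvb hnl
      push_neg at hnl
      exact ⟨⟨u', w', huw, rfl⟩, 0, fun n _ => hnl n⟩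
    by_cases hL1 : ∃ n, ray hc hm hne ha₁ n ∉ edgeHalf G u' w'
    · by_cases hL2 : ∃ n, ray hc hm hne ha₂ n ∉ edgeHalf G u' w'
      · exact absurd (leaves_unique hc hm hne ha₁ ha₂ h12 huw hvm hL1 hL2) id
      · by_cases hL3 : ∃ n, ray hc hm hne ha₃ n ∉ edgeHalf G u' w'
        · exact absurd (leaves_unique hc hm hne ha₁ ha₃ h13 huw hvm hL1 hL3) id
        · exact Or.inl (Or.inr ⟨hmem a₂ ha₂ hL2, hmem a₃ ha₃ hL3⟩)
    · by_cases hL2 : ∃ n, ray hc hm hne ha₂ n ∉ edgeHalf G u' w'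
      · by_cases hL3 : ∃ n, ray hc hm hne ha₃ n ∉ edgeHalf G u' w'
        · exact absurd (leaves_unique hc hm hne ha₂ ha₃ h23 huw hvm hL2 hL3) id
        · exact Or.inr ⟨hmem a₃ ha₃ hL3, hmem a₁ ha₁ hL1⟩
      · exact Or.inl (Or.inl ⟨hmem a₁ ha₁ hL1, hmem a₂ ha₂ hL2⟩)

lemma op_holds (ha₁ : G.Adj v a₁) (ha₂ : G.Adj v a₂) (ha₃ : G.Adj v a₃)
    (h12 : a₁ ≠ a₂) (h13 : a₁ ≠ a₃) (h23 : a₂ ≠ a₃)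
    (hdisj : edgeHalf G v a₁ ∩ edgeHalf G v a₂ = ∅) :
    Op G (rayEnd G (ray hc hm hne ha₁)) (rayEnd G (ray hc hm hne ha₂))
      (rayEnd G (ray hc hm hne ha₃)) := by
  have hmed := med_eq hc hm hne ha₁ ha₂ ha₃ h12 h13 h23
  refine ⟨⟨v, hmed⟩, ?_⟩
  rw [hmed]
  have hxysub : rayEnd G (ray hc hm hne ha₁) ∩ rayEnd G (ray hc hm hne ha₂) ⊆
      princ G v := by
    rintro t ⟨htx, hty⟩
    exact ⟨htx.1, key2 hc hm hne ha₁ ha₂ h12 htx hty⟩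
  ext σ
  constructor
  · rintro ⟨hσu, hσsub⟩
    by_cases hL : rayEnd G (ray hc hm hne ha₁) ∩ princ G v ⊆ σ
    · exact Or.inl ⟨hσu, hL⟩
    by_cases hR : princ G v ∩ rayEnd G (ray hc hm hne ha₂) ⊆ σ
    · exact Or.inr ⟨hσu, hR⟩
    exfalso
    obtain ⟨h, hhm, hhn⟩ := Set.not_subset.mp hL
    obtain ⟨k, hkm, hkn⟩ := Set.not_subset.mp hR
    have hcs : hᶜ ∈ σ := by
      have := hσu.2.1 h hhm.2.1
      tauto
    have hkcs : kᶜ ∈ σ := by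
      have := hσu.2.1 k hkm.1.1
      tauto
    have hhy : h ∉ rayEnd G (ray hc hm hne ha₂) := fun hy => hhn (hσsub ⟨hhm.1, hy⟩)
    have hhyc : hᶜ ∈ rayEnd G (ray hc hm hne ha₂) := by
      have := (rayEnd_ultra hc hm hne ha₂).2.1 h hhm.2.1
      tauto
    have hkx : k ∉ rayEnd G (ray hc hm hne ha₁) := fun hx => hkn (hσsub ⟨hx, hkm.2⟩)
    have hkxc : kᶜ ∈ rayEnd G (ray hc hm hne ha₁) := by
      have := (rayEnd_ultra hc hm hne ha₁).2.1 k hkm.1.1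
      tauto
    -- h is a halfspace containing v which ray 2 leaves
    obtain ⟨u', w', huw, rfl⟩ := hhm.2.1
    obtain ⟨N2, hN2⟩ := hhyc.2
    obtain ⟨mh, hmh⟩ := ray_leaves hc hm hne ha₂ huw hhm.2.2
      ⟨N2, fun hmem => (hN2 N2 le_rfl) hmem⟩
    have hsub2 : (edgeHalf G u' w')ᶜ ⊆ edgeHalf G v a₂ := by
      rw [hmh, ← rayH_zero hc hm hne ha₂]
      exact rayH_subset hc hm hne ha₂ (Nat.zero_le mh)
    -- k is a halfspace containing v which ray 1 leaves
    obtain ⟨u'', w'', huw', rfl⟩ := hkm.1.1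
    obtain ⟨N1, hN1⟩ := hkxc.2
    obtain ⟨mk, hmk⟩ := ray_leaves hc hm hne ha₁ huw' hkm.1.2
      ⟨N1, fun hmem => (hN1 N1 le_rfl) hmem⟩
    have hsub1 : (edgeHalf G u'' w'')ᶜ ⊆ edgeHalf G v a₁ := by
      rw [hmk, ← rayH_zero hc hm hne ha₁]
      exact rayH_subset hc hm hne ha₁ (Nat.zero_le mk)
    obtain ⟨z, hz1, hz2⟩ := hσu.2.2 _ hcs _ hkcs
    have : z ∈ edgeHalf G v a₁ ∩ edgeHalf G v a₂ := ⟨hsub1 hz2, hsub2 hz1⟩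
    rw [hdisj] at this
    exact this
  · rintro (⟨hσu, hσsub⟩ | ⟨hσu, hσsub⟩)
    · exact ⟨hσu, fun t ht => hσsub ⟨ht.1, hxysub ht⟩⟩
    · exact ⟨hσu, fun t ht => hσsub ⟨hxysub ht, ht.2⟩⟩

end Main

lemma forward (hc : G.Connected) (hm : MedU G) (hne : NoExtremal G)
    (hnt : Nontrivial V) (hsk : ¬ Skinny G v) :
    ∃ x y z : Set (Set V), IsBdryPt G x ∧ IsBdryPt G y ∧ IsBdryPt G z ∧
      IsStraightPt G x ∧ IsStraightPt G y ∧ IsStraightPt G z ∧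
      med x y z = princ G v ∧ Op G x y z := by
  classical
  obtain ⟨w0, hw0⟩ := exists_ne v
  have hdvw : G.dist v w0 ≠ 0 := by
    rw [SimpleGraph.dist_ne_zero_iff_ne_and_reachable]
    exact ⟨Ne.symm hw0, hc v w0⟩
  obtain ⟨a₁, ha₁, -⟩ := exists_step hc hdvw
  have hnev := hne v
  rw [Extremal] at hnev
  push_neg at hnev
  obtain ⟨a₂, ha₂, ha₂₁, hnsq⟩ := hnev a₁ ha₁
  have hdisj : edgeHalf G v a₁ ∩ edgeHalf G v a₂ = ∅ := by
    by_contra hd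
    apply hnsq
    apply transv_to_square hc hm ha₁ ha₂ (Ne.symm ha₂₁)
    exact ⟨Set.nonempty_iff_ne_empty.mpr hd,
      ⟨a₁, right_mem_edgeHalf ha₁, not_mem_edgeHalf_other hc hm ha₁ ha₂ (Ne.symm ha₂₁)⟩,
      ⟨a₂, not_mem_edgeHalf_other hc hm ha₂ ha₁ ha₂₁, right_mem_edgeHalf ha₂⟩,
      ⟨v, left_not_mem_edgeHalf, left_not_mem_edgeHalf⟩⟩
  obtain ⟨a₃, ha₃, h31, h32⟩ : ∃ a₃, G.Adj v a₃ ∧ a₃ ≠ a₁ ∧ a₃ ≠ a₂ := by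
    by_contra h3
    push_neg at h3
    apply hsk
    have hset : {u : V | G.Adj v u} = {a₁, a₂} := by
      apply Set.Subset.antisymm
      · intro t ht
        by_cases ht1 : t = a₁
        · exact Or.inl ht1
        · exact Or.inr (h3 t ht ht1)
      · rintro t (rfl | rfl)
        · exact ha₁
        · exact ha₂
    rw [Skinny, hset]
    exact Set.encard_pair (Ne.symm ha₂₁)
  exact ⟨rayEnd G (ray hc hm hne ha₁), rayEnd G (ray hc hm hne ha₂),
    rayEnd G (ray hc hm hne ha₃),
    rayEnd_bdry hc hm hne ha₁, rayEnd_bdry hc hm hne ha₂, rayEnd_bdry hc hm hne ha₃,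
    rayEnd_straight hc hm hne ha₁, rayEnd_straight hc hm hne ha₂,
    rayEnd_straight hc hm hne ha₃,
    med_eq hc hm hne ha₁ ha₂ ha₃ (Ne.symm ha₂₁) (Ne.symm h31) (Ne.symm h32),
    op_holds hc hm hne ha₁ ha₂ ha₃ (Ne.symm ha₂₁) (Ne.symm h31) (Ne.symm h32) hdisj⟩


lemma backward (hc : G.Connected) (hm : MedU G) {x y z : Set (Set V)}
    (hx : IsBdryPt G x) (hy : IsBdryPt G y) (hz : IsBdryPt G z)
    (hmed : med x y z = princ G v) : ¬ Skinny G v := by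
  intro hsk
  rw [Skinny] at hsk
  obtain ⟨a, b, hab, hset⟩ := Set.encard_eq_two.mp hsk
  have hva : G.Adj v a := by
    have : a ∈ {u : V | G.Adj v u} := by rw [hset]; exact Or.inl rfl
    exact this
  have hvb : G.Adj v b := by
    have : b ∈ {u : V | G.Adj v u} := by rw [hset]; exact Or.inr rfl
    exact this
  -- every boundary point contains one of the two halfspaces at v
  have hcont : ∀ σ : Set (Set V), IsBdryPt G σ →
      edgeHalf G v a ∈ σ ∨ edgeHalf G v b ∈ σ := by
    intro σ hσ
    by_contra hno
    push_neg at hno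
    obtain ⟨hna, hnb⟩ := hno
    have hEa : IsHalfspace G (edgeHalf G v a) := ⟨v, a, hva, rfl⟩
    have hEb : IsHalfspace G (edgeHalf G v b) := ⟨v, b, hvb, rfl⟩
    have hca : (edgeHalf G v a)ᶜ ∈ σ := by
      have := hσ.1.2.1 _ hEa; tauto
    have hcb : (edgeHalf G v b)ᶜ ∈ σ := by
      have := hσ.1.2.1 _ hEb; tauto
    have hall : ∀ t ∈ σ, v ∈ t := by
      intro t htσ
      obtain ⟨u', w', huw, rfl⟩ := hσ.1.1 t htσ
      obtain ⟨p0, hp1, hp2⟩ := hσ.1.2.2 _ htσ _ hca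
      obtain ⟨q0, hq1, hq2⟩ := hσ.1.2.2 _ htσ _ hcb
      obtain ⟨m0, ⟨g1, g2, g3⟩, -⟩ := hm p0 q0 v
      rw [mem_vInterval] at g1 g2 g3
      have hm0t : m0 ∈ edgeHalf G u' w' := edgeHalf_convex hc hm huw hp1 hq1 g1
      have hp2' : p0 ∈ edgeHalf G a v := by
        rw [← compl_edgeHalf hc hm hva]; exact hp2
      have hq2' : q0 ∈ edgeHalf G b v := by
        rw [← compl_edgeHalf hc hm hvb]; exact hq2
      have hm0a : m0 ∈ edgeHalf G a v := by
        apply edgeHalf_convex hc hm hva.symm hp2' (right_mem_edgeHalf hva.symm)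
        have c1 : G.dist v m0 = G.dist m0 v := G.dist_comm ..
        have c2 : G.dist m0 p0 = G.dist p0 m0 := G.dist_comm ..
        have c3 : G.dist v p0 = G.dist p0 v := G.dist_comm ..
        omega
      have hm0b : m0 ∈ edgeHalf G b v :=
        edgeHalf_convex hc hm hvb.symm hq2' (right_mem_edgeHalf hvb.symm) g2
      by_cases hm0v : G.dist v m0 = 0
      · have he : v = m0 := (hc.dist_eq_zero_iff).mp hm0v
        rw [he]
        exact hm0t
      · exfalso
        obtain ⟨t', hvt', hts⟩ := exists_step hc hm0v
        have ht' : t' ∈ {u : V | G.Adj v u} := hvt'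
        rw [hset] at ht'
        rw [mem_edgeHalf] at hm0a hm0b
        rcases ht' with rfl | rfl
        · have c1 : G.dist m0 t' = G.dist t' m0 := G.dist_comm ..
          have c2 : G.dist m0 v = G.dist v m0 := G.dist_comm ..
          omega
        · have c1 : G.dist m0 t' = G.dist t' m0 := G.dist_comm ..
          have c2 : G.dist m0 v = G.dist v m0 := G.dist_comm ..
          omega
    apply hσ.2 v
    apply Set.Subset.antisymm
    · intro t htσ
      exact ⟨hσ.1.1 t htσ, hall t htσ⟩
    · rintro t ⟨hth, hvt⟩
      by_contra htn
      have htc : tᶜ ∈ σ := by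
        have := hσ.1.2.1 t hth; tauto
      exact (hall _ htc) hvt
  -- the complements of the two halfspaces at v lie in the median
  have hprinc : ∀ (c : V), G.Adj v c → (edgeHalf G v c)ᶜ ∈ med x y z := by
    intro c hvc
    rw [hmed]
    exact ⟨⟨c, v, hvc.symm, compl_edgeHalf hc hm hvc⟩, left_not_mem_edgeHalf⟩
  have hnot : ∀ (c : V), G.Adj v c → ∀ σ : Set (Set V), IsUltra G σ →
      (edgeHalf G v c)ᶜ ∈ σ → edgeHalf G v c ∉ σ := by
    intro c hvc σ hσ hcc
    have := hσ.2.1 _ (⟨v, c, hvc, rfl⟩ : IsHalfspace G (edgeHalf G v c))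
    tauto
  have ha' := hprinc a hva
  have hb' := hprinc b hvb
  have hxc := hcont x hx
  have hyc := hcont y hy
  have hzc := hcont z hz
  have na : (edgeHalf G v a ∉ x ∧ edgeHalf G v a ∉ y) ∨
      (edgeHalf G v a ∉ y ∧ edgeHalf G v a ∉ z) ∨
      (edgeHalf G v a ∉ z ∧ edgeHalf G v a ∉ x) := by
    rcases ha' with (⟨m1, m2⟩ | ⟨m1, m2⟩) | ⟨m1, m2⟩
    · exact Or.inl ⟨hnot a hva x hx.1 m1, hnot a hva y hy.1 m2⟩
    · exact Or.inr (Or.inl ⟨hnot a hva y hy.1 m1, hnot a hva z hz.1 m2⟩)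
    · exact Or.inr (Or.inr ⟨hnot a hva z hz.1 m1, hnot a hva x hx.1 m2⟩)
  have nb : (edgeHalf G v b ∉ x ∧ edgeHalf G v b ∉ y) ∨
      (edgeHalf G v b ∉ y ∧ edgeHalf G v b ∉ z) ∨
      (edgeHalf G v b ∉ z ∧ edgeHalf G v b ∉ x) := by
    rcases hb' with (⟨m1, m2⟩ | ⟨m1, m2⟩) | ⟨m1, m2⟩
    · exact Or.inl ⟨hnot b hvb x hx.1 m1, hnot b hvb y hy.1 m2⟩
    · exact Or.inr (Or.inl ⟨hnot b hvb y hy.1 m1, hnot b hvb z hz.1 m2⟩)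
    · exact Or.inr (Or.inr ⟨hnot b hvb z hz.1 m1, hnot b hvb x hx.1 m2⟩)
  tauto

end Stmt16Aux
/-- Lemma `skinny points`: in a CAT(0) cube complex with at
least two vertices and no extremal vertices, a vertex `v` is not skinny if and
only if there are straight boundary points `x, y, z` with `m(x,y,z) = v` and
`x op_z y`. -/
theorem stmt16 {V : Type*} (G : SimpleGraph V) (hG : IsCCC G)
    (hnt : Nontrivial V) (hne : NoExtremal G) (v : V) :
    ¬ Skinny G v ↔
      ∃ x y z : Set (Set V), IsBdryPt G x ∧ IsBdryPt G y ∧ IsBdryPt G z ∧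
        IsStraightPt G x ∧ IsStraightPt G y ∧ IsStraightPt G z ∧
        med x y z = princ G v ∧ Op G x y z := by
  have hc : G.Connected := hG.1
  have hm : Stmt16Aux.MedU G := hG.2
  constructor
  · intro hsk
    exact Stmt16Aux.forward hc hm hne hnt hsk
  · rintro ⟨x, y, z, hx, hy, hz, -, -, -, hmed, -⟩
    exact Stmt16Aux.backward hc hm hx hy hz hmed
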